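/- Let X and Y be zero-dimensional metrizable compact spaces, each of cardinality at least three, and let f : X → X and g : Y → Y be minimal homeomorphisms. Then f and g are flip-conjugate if and only if (X,G_f) ≼^i_c (Y,G_g); moreover, any map witnessing one of these two conditions witnesses the other, and consequently (X,G_f) ≼^i_c (Y,G_g) implies (Y,G_g) ≼^i_c (X,G_f). -/

import Mathlib

open TopologicalSpace

/-- A *graph* on `X`: a symmetric irreflexive binary relation on `X`. -/
def IsGraph {X : Type*} (G : Set (X × X)) : Prop :=
  (∀ x y : X, (x, y) ∈ G → (y, x) ∈ G) ∧ ∀ x : X, (x, x) ∉ G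

/-- `(X, G)` admits a continuous coloring with `n` colors
(`Fin n` carries the discrete topology). -/
def HasContColoring {X : Type*} [TopologicalSpace X] (G : Set (X × X)) (n : ℕ) : Prop :=
  ∃ c : X → Fin n, Continuous c ∧ ∀ x y : X, (x, y) ∈ G → c x ≠ c y

/-- `(X, G)` admits a countable continuous coloring (`ℕ` is discrete). -/
def HasCtbleContColoring {X : Type*} [TopologicalSpace X] (G : Set (X × X)) : Prop :=
  ∃ c : X → ℕ, Continuous c ∧ ∀ x y : X, (x, y) ∈ G → c x ≠ c y

/-- `(X,G) ≼_c (Y,H)` : there is a continuous homomorphism. -/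
def RedC {X Y : Type*} [TopologicalSpace X] [TopologicalSpace Y]
    (G : Set (X × X)) (H : Set (Y × Y)) : Prop :=
  ∃ φ : X → Y, Continuous φ ∧ ∀ x y : X, (x, y) ∈ G → (φ x, φ y) ∈ H

/-- `(X,G) ≼^i_c (Y,H)` : there is an injective continuous homomorphism. -/
def RedIC {X Y : Type*} [TopologicalSpace X] [TopologicalSpace Y]
    (G : Set (X × X)) (H : Set (Y × Y)) : Prop :=
  ∃ φ : X → Y, Continuous φ ∧ Function.Injective φ ∧
    ∀ x y : X, (x, y) ∈ G → (φ x, φ y) ∈ H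

/-- A space is zero-dimensional if the clopen sets form a basis. -/
def ZeroDim (X : Type*) [TopologicalSpace X] : Prop :=
  IsTopologicalBasis {s : Set X | IsClopen s}

/-- zero-dimensional metrizable compact -/
def Is0DMC (X : Type*) [TopologicalSpace X] : Prop :=
  CompactSpace X ∧ MetrizableSpace X ∧ ZeroDim X

/-- zero-dimensional metrizable separable -/
def Is0DMS (X : Type*) [TopologicalSpace X] : Prop :=
  MetrizableSpace X ∧ SeparableSpace X ∧ ZeroDim X

/-- The graph induced by a (total) function `f : X → X`. -/
def FnGraph {X : Type*} (f : X → X) : Set (X × X) :=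
  {p | p.1 ≠ p.2 ∧ (p.2 = f p.1 ∨ p.1 = f p.2)}

/-- A homeomorphism of a compact space is minimal if all of its ℤ-orbits are dense. -/
def IsMinimalHomeo {X : Type*} [TopologicalSpace X] (f : X ≃ₜ X) : Prop :=
  ∀ x : X, Dense (Set.range fun i : ℤ => (f.toEquiv ^ i) x)

lemma orbit_mem_aux {X : Type*} [TopologicalSpace X] (f : X ≃ₜ X) (S : Set X)
    (hfwd : ∀ x ∈ S, f x ∈ S) (hbwd : ∀ x ∈ S, f.symm x ∈ S)
    {a : X} (ha : a ∈ S) : ∀ i : ℤ, (f.toEquiv ^ i) a ∈ S := by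
  intro i
  induction i using Int.induction_on with
  | zero => simpa using ha
  | succ i ih =>
      have h : (f.toEquiv ^ ((i : ℤ) + 1)) a = f ((f.toEquiv ^ (i : ℤ)) a) := by
        rw [add_comm, zpow_add, zpow_one, Equiv.Perm.mul_apply]; rfl
      rw [h]; exact hfwd _ ih
  | pred i ih =>
      have h : (f.toEquiv ^ (-(i : ℤ) - 1)) a = f.symm ((f.toEquiv ^ (-(i : ℤ))) a) := by
        rw [sub_eq_neg_add, zpow_add, zpow_neg_one, Equiv.Perm.mul_apply]; rfl
      rw [h]; exact hbwd _ ih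

lemma minimal_closed_inv {X : Type*} [TopologicalSpace X] (f : X ≃ₜ X)
    (hf : IsMinimalHomeo f) (S : Set X) (hS : IsClosed S) (hne : S.Nonempty)
    (hfwd : ∀ x ∈ S, f x ∈ S) (hbwd : ∀ x ∈ S, f.symm x ∈ S) : S = Set.univ := by
  obtain ⟨a, ha⟩ := hne
  have horb : Set.range (fun i : ℤ => (f.toEquiv ^ i) a) ⊆ S := by
    rintro _ ⟨i, rfl⟩; exact orbit_mem_aux f S hfwd hbwd ha i
  apply Set.eq_univ_of_univ_subset
  calc Set.univ = closure (Set.range fun i : ℤ => (f.toEquiv ^ i) a) := ((hf a).closure_eq).symm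
    _ ⊆ closure S := closure_mono horb
    _ = S := hS.closure_eq

lemma no_period_two {X : Type*} [TopologicalSpace X] [T1Space X] (f : X ≃ₜ X)
    (hf : IsMinimalHomeo f) (hX3 : ∃ a b c : X, a ≠ b ∧ a ≠ c ∧ b ≠ c) :
    ∀ x : X, f (f x) ≠ x := by
  intro x hx
  have hsub : Set.range (fun i : ℤ => (f.toEquiv ^ i) x) ⊆ ({x, f x} : Set X) := by
    rintro _ ⟨i, rfl⟩
    have hfwd : ∀ y ∈ ({x, f x} : Set X), f y ∈ ({x, f x} : Set X) := by
      rintro y (rfl | rfl)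
      · right; rfl
      · left; exact hx
    have hbwd : ∀ y ∈ ({x, f x} : Set X), f.symm y ∈ ({x, f x} : Set X) := by
      have h1 : f.symm x = f x := f.symm_apply_eq.mpr hx.symm
      intro y hy
      rcases hy with rfl | hy
      · rw [h1]; right; rfl
      · rw [Set.mem_singleton_iff] at hy; subst hy
        rw [f.symm_apply_apply]; left; rfl
    exact orbit_mem_aux f _ hfwd hbwd (by left; rfl) i
  have hcl : IsClosed ({x, f x} : Set X) := (Set.toFinite _).isClosed
  have huniv : ({x, f x} : Set X) = Set.univ := by
    apply Set.eq_univ_of_univ_subset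
    calc Set.univ = closure (Set.range fun i : ℤ => (f.toEquiv ^ i) x) := ((hf x).closure_eq).symm
      _ ⊆ closure ({x, f x} : Set X) := closure_mono hsub
      _ = _ := hcl.closure_eq
  obtain ⟨a, b, c, hab, hac, hbc⟩ := hX3
  have ha : a ∈ ({x, f x} : Set X) := huniv ▸ Set.mem_univ a
  have hb : b ∈ ({x, f x} : Set X) := huniv ▸ Set.mem_univ b
  have hc : c ∈ ({x, f x} : Set X) := huniv ▸ Set.mem_univ c
  rcases ha with ha | ha <;> rcases hb with hb | hb <;> rcases hc with hc | hc <;> simp_all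

lemma no_fixed {X : Type*} [TopologicalSpace X] [T1Space X] (f : X ≃ₜ X)
    (hf : IsMinimalHomeo f) (hX3 : ∃ a b c : X, a ≠ b ∧ a ≠ c ∧ b ≠ c) :
    ∀ x : X, f x ≠ x := fun x hx => no_period_two f hf hX3 x (by rw [hx, hx])

lemma workhorse {X Y : Type*} [TopologicalSpace X] [TopologicalSpace Y]
    (hX : Is0DMC X) (hY : Is0DMC Y)
    (hX3 : ∃ a b c : X, a ≠ b ∧ a ≠ c ∧ b ≠ c)
    (hY3 : ∃ a b c : Y, a ≠ b ∧ a ≠ c ∧ b ≠ c)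
    (f : X ≃ₜ X) (g : Y ≃ₜ Y) (hf : IsMinimalHomeo f) (hg : IsMinimalHomeo g)
    (φ : X → Y) (hc : Continuous φ) (hi : Function.Injective φ)
    (hhom : ∀ x y : X, (x, y) ∈ FnGraph ⇑f → (φ x, φ y) ∈ FnGraph ⇑g) :
    ∃ e : X ≃ₜ Y, ⇑e = φ ∧ ((∀ x, e (f x) = g (e x)) ∨ ∀ x, e (f x) = g.symm (e x)) := by
  haveI : CompactSpace X := hX.1
  haveI := hX.2.1
  haveI := hY.2.1
  have Kf2 : ∀ x, f (f x) ≠ x := no_period_two f hf hX3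
  have Kf1 : ∀ x, f x ≠ x := no_fixed f hf hX3
  have Kg2 : ∀ y, g (g y) ≠ y := no_period_two g hg hY3
  have hedge : ∀ x : X, φ (f x) = g (φ x) ∨ φ (f x) = g.symm (φ x) := by
    intro x
    have h := hhom x (f x) ⟨(Kf1 x).symm, Or.inl rfl⟩
    rcases h.2 with h2 | h2
    · exact Or.inl h2
    · exact Or.inr (g.symm_apply_eq.mpr h2).symm
  set A := {x : X | φ (f x) = g (φ x)} with hAdef
  set B := {x : X | φ (f x) = g.symm (φ x)} with hBdef
  have hAc : IsClosed A := isClosed_eq (hc.comp f.continuous) (g.continuous.comp hc)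
  have hBc : IsClosed B := isClosed_eq (hc.comp f.continuous) (g.symm.continuous.comp hc)
  have hDisj : ∀ x, x ∈ A → x ∈ B → False := by
    intro x h1 h2
    have h1' : φ (f x) = g (φ x) := h1
    have h2' : φ (f x) = g.symm (φ x) := h2
    exact Kg2 (φ x) (by rw [← h1', h2', g.apply_symm_apply])
  have hAf : ∀ x ∈ A, f x ∈ A := by
    intro x hx
    rcases hedge (f x) with h | h
    · exact h
    · exfalso
      have hx' : φ (f x) = g (φ x) := hx
      have : φ (f (f x)) = φ x := by rw [h, hx', g.symm_apply_apply]
      exact Kf2 x (hi this)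
  have hBf : ∀ x ∈ B, f x ∈ B := by
    intro x hx
    rcases hedge (f x) with h | h
    · exfalso
      have hx' : φ (f x) = g.symm (φ x) := hx
      have : φ (f (f x)) = φ x := by rw [h, hx', g.apply_symm_apply]
      exact Kf2 x (hi this)
    · exact h
  have hAb : ∀ x ∈ A, f.symm x ∈ A := by
    intro x hx
    rcases hedge (f.symm x) with h | h
    · exact h
    · exfalso
      have h2 : f (f.symm x) ∈ B := hBf _ h
      rw [f.apply_symm_apply] at h2
      exact hDisj x hx h2
  have hBb : ∀ x ∈ B, f.symm x ∈ B := by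
    intro x hx
    rcases hedge (f.symm x) with h | h
    · exfalso
      have h2 : f (f.symm x) ∈ A := hAf _ h
      rw [f.apply_symm_apply] at h2
      exact hDisj x h2 hx
    · exact h
  obtain ⟨a0, -, -, -, -, -⟩ := hX3
  have hcc : (∀ x, φ (f x) = g (φ x)) ∨ (∀ x, φ (f x) = g.symm (φ x)) := by
    rcases Set.eq_empty_or_nonempty A with hA0 | hA1
    · right
      have hB1 : B.Nonempty := by
        rcases hedge a0 with h | h
        · exact absurd (show a0 ∈ A from h) (by rw [hA0]; exact Set.notMem_empty a0)
        · exact ⟨a0, h⟩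
      have := minimal_closed_inv f hf B hBc hB1 hBf hBb
      intro x
      exact (this ▸ Set.mem_univ x : x ∈ B)
    · left
      have := minimal_closed_inv f hf A hAc hA1 hAf hAb
      intro x
      exact (this ▸ Set.mem_univ x : x ∈ A)
  have hsurj : Function.Surjective φ := by
    have hcr : IsClosed (Set.range φ) := (isCompact_range hc).isClosed
    have hfwd : ∀ y ∈ Set.range φ, g y ∈ Set.range φ := by
      rintro _ ⟨x, rfl⟩
      rcases hcc with h | h
      · exact ⟨f x, h x⟩
      · refine ⟨f.symm x, ?_⟩
        have := h (f.symm x)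
        rw [f.apply_symm_apply] at this
        rw [this, g.apply_symm_apply]
    have hbwd : ∀ y ∈ Set.range φ, g.symm y ∈ Set.range φ := by
      rintro _ ⟨x, rfl⟩
      rcases hcc with h | h
      · refine ⟨f.symm x, ?_⟩
        have := h (f.symm x)
        rw [f.apply_symm_apply] at this
        rw [this, g.symm_apply_apply]
      · exact ⟨f x, h x⟩
    have := minimal_closed_inv g hg _ hcr ⟨φ a0, a0, rfl⟩ hfwd hbwd
    exact Set.range_eq_univ.mp this
  let e : X ≃ Y := Equiv.ofBijective φ ⟨hi, hsurj⟩
  have hce : Continuous e := hc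
  exact ⟨hce.homeoOfEquivCompactToT2, rfl, hcc⟩

lemma flipconj_props {X Y : Type*} [TopologicalSpace X] [TopologicalSpace Y]
    (f : X ≃ₜ X) (g : Y ≃ₜ Y) (e : X ≃ₜ Y)
    (he : (∀ x, e (f x) = g (e x)) ∨ ∀ x, e (f x) = g.symm (e x)) :
    Function.Injective (⇑e) ∧ Continuous (⇑e) ∧
      ∀ x y : X, (x, y) ∈ FnGraph ⇑f → (e x, e y) ∈ FnGraph ⇑g := by
  refine ⟨e.injective, e.continuous, ?_⟩
  rintro x y ⟨hxy, h | h⟩ <;> dsimp only at hxy h <;> subst h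
  · refine ⟨e.injective.ne hxy, ?_⟩
    rcases he with he | he
    · exact Or.inl (he x)
    · refine Or.inr ?_
      rw [he x, g.apply_symm_apply]
  · refine ⟨e.injective.ne hxy, ?_⟩
    rcases he with he | he
    · exact Or.inr (he y)
    · refine Or.inl ?_
      rw [he y, g.apply_symm_apply]

lemma flipconj_symm_hom {X Y : Type*} [TopologicalSpace X] [TopologicalSpace Y]
    (f : X ≃ₜ X) (g : Y ≃ₜ Y) (e : X ≃ₜ Y)
    (he : (∀ x, e (f x) = g (e x)) ∨ ∀ x, e (f x) = g.symm (e x)) :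
    ∀ x y : Y, (x, y) ∈ FnGraph ⇑g → (e.symm x, e.symm y) ∈ FnGraph ⇑f := by
  rintro x y ⟨hxy, h | h⟩ <;> dsimp only at hxy h <;> subst h
  · refine ⟨e.symm.injective.ne hxy, ?_⟩
    rcases he with he | he
    · refine Or.inl (e.injective ?_)
      rw [e.apply_symm_apply, he, e.apply_symm_apply]
    · refine Or.inr (e.injective ?_)
      rw [e.apply_symm_apply, he, e.apply_symm_apply, g.symm_apply_apply]
  · refine ⟨e.symm.injective.ne hxy, ?_⟩
    rcases he with he | he
    · refine Or.inr (e.injective ?_)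
      rw [e.apply_symm_apply, he, e.apply_symm_apply]
    · refine Or.inl (e.injective ?_)
      rw [e.apply_symm_apply, he, e.apply_symm_apply, g.symm_apply_apply]

theorem stmt18 (X Y : Type*) [TopologicalSpace X] [TopologicalSpace Y]
    (hX : Is0DMC X) (hY : Is0DMC Y)
    (hX3 : ∃ a b c : X, a ≠ b ∧ a ≠ c ∧ b ≠ c)
    (hY3 : ∃ a b c : Y, a ≠ b ∧ a ≠ c ∧ b ≠ c)
    (f : X ≃ₜ X) (g : Y ≃ₜ Y) (hf : IsMinimalHomeo f) (hg : IsMinimalHomeo g) :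
    ((∃ φ : X ≃ₜ Y, (∀ x, φ (f x) = g (φ x)) ∨ ∀ x, φ (f x) = g.symm (φ x)) ↔
        RedIC (FnGraph ⇑f) (FnGraph ⇑g)) ∧
    (∀ φ : X → Y, Continuous φ → Function.Injective φ →
        (∀ x y : X, (x, y) ∈ FnGraph ⇑f → (φ x, φ y) ∈ FnGraph ⇑g) →
        ∃ e : X ≃ₜ Y, ⇑e = φ ∧
          ((∀ x, e (f x) = g (e x)) ∨ ∀ x, e (f x) = g.symm (e x))) ∧
    (∀ e : X ≃ₜ Y, ((∀ x, e (f x) = g (e x)) ∨ ∀ x, e (f x) = g.symm (e x)) →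
        Function.Injective (⇑e) ∧ Continuous (⇑e) ∧
          ∀ x y : X, (x, y) ∈ FnGraph ⇑f → (e x, e y) ∈ FnGraph ⇑g) ∧
    (RedIC (FnGraph ⇑f) (FnGraph ⇑g) → RedIC (FnGraph ⇑g) (FnGraph ⇑f)) := by
  have part2 := workhorse hX hY hX3 hY3 f g hf hg
  refine ⟨⟨?_, ?_⟩, part2, fun e he => flipconj_props f g e he, ?_⟩
  · rintro ⟨e, he⟩
    obtain ⟨h1, h2, h3⟩ := flipconj_props f g e he
    exact ⟨e, h2, h1, h3⟩
  · rintro ⟨φ, hc, hi, hh⟩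
    obtain ⟨e, -, hcc⟩ := part2 φ hc hi hh
    exact ⟨e, hcc⟩
  · rintro ⟨φ, hc, hi, hh⟩
    obtain ⟨e, -, hcc⟩ := part2 φ hc hi hh
    exact ⟨e.symm, e.symm.continuous, e.symm.injective, flipconj_symm_hom f g e hcc⟩
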